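/- The function 𝔉 is well defined on D: for every complex sequence x = {x_k}_{k≥1} with ∑_{k=1}^{∞} |x_k x_{k+1}| < ∞, the multiple series 1 + ∑_{m=1}^{∞} (-1)^m ∑_{k_1 ≥ 1, k_{j+1} ≥ k_j + 2} x_{k_1} x_{k_1+1} ⋯ x_{k_m} x_{k_m+1} converges absolutely, and moreover |𝔉(x)| ≤ exp(∑_{k=1}^{∞} |x_k x_{k+1}|). -/

import Mathlib

open Classical

noncomputable def Fterm (x : ℕ → ℂ) (m : ℕ) (k : Fin m → ℕ) : ℂ :=
  if ∀ i : Fin m, ∀ h : (i : ℕ) + 1 < m, k i + 2 ≤ k ⟨(i : ℕ) + 1, h⟩ then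
    ∏ i : Fin m, x (k i) * x (k i + 1)
  else 0

/-- The function 𝔉 applied to the sequence (x 0, x 1, x 2, …), i.e. x is 0-based:
`x k` represents `x_{k+1}` of the paper. -/
noncomputable def FF (x : ℕ → ℂ) : ℂ :=
  1 + ∑' m : ℕ, (-1 : ℂ) ^ (m + 1) * (∑' k : Fin (m + 1) → ℕ, Fterm x (m + 1) k)

/-- 𝔉 of the finite tuple (x 0, …, x (n-1)), by extending with zeros. -/
noncomputable def FFfin (n : ℕ) (x : ℕ → ℂ) : ℂ :=
  FF fun k => if k < n then x k else 0

def Gap (m : ℕ) (k : Fin m → ℕ) : Prop :=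
  ∀ i : Fin m, ∀ h : (i : ℕ) + 1 < m, k i + 2 ≤ k ⟨(i : ℕ) + 1, h⟩

lemma gap_strictMono {m : ℕ} {k : Fin m → ℕ} (hk : Gap m k) : StrictMono k := by
  have key : ∀ b a : ℕ, ∀ hb : b < m, ∀ ha : a < m, a < b → k ⟨a, ha⟩ < k ⟨b, hb⟩ := by
    intro b
    induction b with
    | zero => intro a hb ha h; omega
    | succ b ih =>
      intro a hb ha h
      have hb' : b < m := by omega
      have h2 := hk ⟨b, hb'⟩ hb
      simp only at h2
      rcases Nat.lt_or_ge a b with h' | h'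
      · have := ih a hb' ha h'
        omega
      · have : a = b := by omega
        subst this
        omega
  intro i j hij
  have := key j i j.isLt i.isLt hij
  simpa using this

lemma gap_inj (m : ℕ) :
    Function.Injective (fun p : Equiv.Perm (Fin m) × {k : Fin m → ℕ // Gap m k} =>
      (p.2.1 ∘ p.1 : Fin m → ℕ)) := by
  rintro ⟨σ, k, hk⟩ ⟨σ', k', hk'⟩ hpq
  simp only at hpq
  have hmk := gap_strictMono hk
  have hmk' := gap_strictMono hk'
  set π : Equiv.Perm (Fin m) := σ.symm.trans σ' with hπ
  have heq : ∀ j, k j = k' (π j) := by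
    intro j
    have := congrFun hpq (σ.symm j)
    simpa [hπ] using this
  have hπm : StrictMono (π : Fin m → Fin m) := by
    intro a b hab
    have : k' (π a) < k' (π b) := by rw [← heq, ← heq]; exact hmk hab
    exact hmk'.lt_iff_lt.mp this
  haveI : WellFoundedLT (Fin m) := inferInstance
  have hπid : (π : Fin m → Fin m) = id := by
    refine (StrictMono.range_inj (β := Fin m) (γ := Fin m) hπm strictMono_id).1 ?_
    rw [Set.range_id, π.surjective.range_eq]
  have hπid' : ∀ j, π j = j := fun j => congrFun hπid j
  have hk_eq : k = k' := by
    funext j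
    rw [heq j, hπid' j]
  have hσ : σ = σ' := by
    refine Equiv.ext fun i => ?_
    have := hπid' (σ i)
    simpa [hπ] using this.symm
  subst hσ hk_eq
  rfl

open ENNReal in
lemma sum_pow (A : ℕ → ℝ≥0∞) : ∀ m : ℕ,
    ∑' k : Fin m → ℕ, ∏ i, A (k i) = (∑' n, A n) ^ m := by
  intro m
  induction m with
  | zero =>
    rw [tsum_eq_single (fun i => i.elim0)]
    · simp
    · intro k hk
      exact absurd (funext fun i => i.elim0) hk
  | succ m ih =>
    rw [← (Fin.consEquiv (fun _ : Fin (m + 1) => ℕ)).tsum_eq, pow_succ']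
    rw [ENNReal.tsum_prod']
    have : ∀ (n : ℕ) (k : Fin m → ℕ),
        (∏ i, A (((Fin.consEquiv (fun _ : Fin (m + 1) => ℕ)) (n, k)) i)) = A n * ∏ i, A (k i) := by
      intro n k
      rw [Fin.prod_univ_succ]
      simp [Fin.consEquiv]
    simp_rw [this, ENNReal.tsum_mul_left, ← ih, ENNReal.tsum_mul_right]

open ENNReal in
lemma gap_sum_le (A : ℕ → ℝ≥0∞) (m : ℕ) :
    (m.factorial : ℝ≥0∞) * ∑' k : {k : Fin m → ℕ // Gap m k}, ∏ i, A (k.1 i)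
      ≤ (∑' n, A n) ^ m := by
  rw [← sum_pow A m]
  calc (m.factorial : ℝ≥0∞) * ∑' k : {k : Fin m → ℕ // Gap m k}, ∏ i, A (k.1 i)
      = ∑' p : Equiv.Perm (Fin m) × {k : Fin m → ℕ // Gap m k}, ∏ i, A ((p.2.1 ∘ p.1) i) := by
        rw [ENNReal.tsum_prod']
        have : ∀ (σ : Equiv.Perm (Fin m)) (k : {k : Fin m → ℕ // Gap m k}),
            (∏ i, A ((k.1 ∘ σ) i)) = ∏ i, A (k.1 i) := by
          intro σ k
          exact Equiv.prod_comp σ (fun i => A (k.1 i))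
        simp_rw [this]
        rw [tsum_fintype (f := fun _ : Equiv.Perm (Fin m) =>
          ∑' k : {k : Fin m → ℕ // Gap m k}, ∏ i, A (k.1 i))]
        simp [Finset.sum_const, nsmul_eq_mul, Fintype.card_perm, Fintype.card_fin]
    _ ≤ ∑' k : Fin m → ℕ, ∏ i, A (k i) :=
        ENNReal.tsum_comp_le_tsum_of_injective (gap_inj m) _


open ENNReal in
lemma Fterm_nnnorm_le (x : ℕ → ℂ) (m : ℕ) (k : Fin m → ℕ) :
    (‖Fterm x m k‖₊ : ℝ≥0∞) ≤
      Set.indicator {k : Fin m → ℕ | Gap m k}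
        (fun k => ∏ i, (‖x (k i) * x (k i + 1)‖₊ : ℝ≥0∞)) k := by
  rw [Fterm, Set.indicator_apply]
  simp only [Set.mem_setOf_eq, Gap]
  by_cases h : ∀ i : Fin m, ∀ h : (i : ℕ) + 1 < m, k i + 2 ≤ k ⟨(i : ℕ) + 1, h⟩
  · rw [if_pos h, if_pos h]
    push_cast [nnnorm_prod]
    rfl
  · rw [if_neg h, if_neg h]
    simp

open ENNReal in
lemma Fterm_tsum_le (x : ℕ → ℂ) (m : ℕ) :
    (m.factorial : ℝ≥0∞) * ∑' k : Fin m → ℕ, (‖Fterm x m k‖₊ : ℝ≥0∞)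
      ≤ (∑' n, (‖x n * x (n + 1)‖₊ : ℝ≥0∞)) ^ m := by
  set A : ℕ → ℝ≥0∞ := fun n => (‖x n * x (n + 1)‖₊ : ℝ≥0∞) with hA
  calc (m.factorial : ℝ≥0∞) * ∑' k : Fin m → ℕ, (‖Fterm x m k‖₊ : ℝ≥0∞)
      ≤ (m.factorial : ℝ≥0∞) * ∑' k : Fin m → ℕ,
          Set.indicator {k : Fin m → ℕ | Gap m k} (fun k => ∏ i, A (k i)) k :=
        mul_le_mul_right (ENNReal.tsum_le_tsum (Fterm_nnnorm_le x m)) _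
    _ = (m.factorial : ℝ≥0∞) * ∑' k : {k : Fin m → ℕ // Gap m k}, ∏ i, A (k.1 i) := by
        rw [← tsum_subtype {k : Fin m → ℕ | Gap m k} (fun k => ∏ i, A (k i))]
        rfl
    _ ≤ (∑' n, A n) ^ m := gap_sum_le A m

open ENNReal in
lemma summable_norm_and_tsum_le {ι : Type*} (f : ι → ℂ) (C : ℝ≥0∞) (hC : C ≠ ⊤)
    (h : ∑' i, (‖f i‖₊ : ℝ≥0∞) ≤ C) :
    Summable (fun i => ‖f i‖) ∧ ∑' i, ‖f i‖ ≤ C.toReal := by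
  have hne : ∑' i, (‖f i‖₊ : ℝ≥0∞) ≠ ⊤ := (h.trans_lt hC.lt_top).ne
  have hs : Summable fun i => ‖f i‖₊ := ENNReal.tsum_coe_ne_top_iff_summable.1 hne
  have hcoe : (fun i => ‖f i‖) = fun i => NNReal.toReal ‖f i‖₊ := by
    funext i; simp
  constructor
  · rw [hcoe]
    exact NNReal.summable_coe.2 hs
  · calc ∑' i, ‖f i‖ = NNReal.toReal (∑' i, ‖f i‖₊) := by
          rw [hcoe]; exact NNReal.coe_tsum.symm
      _ = (∑' i, (‖f i‖₊ : ℝ≥0∞)).toReal := by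
          rw [← ENNReal.coe_tsum hs, ENNReal.coe_toReal]
      _ ≤ C.toReal := ENNReal.toReal_mono hC h


open scoped ENNReal NNReal

theorem FF_well_defined (x : ℕ → ℂ) (hx : Summable fun k => ‖x k * x (k + 1)‖) :
    (∀ m : ℕ, Summable fun k : Fin m → ℕ => ‖Fterm x m k‖) ∧
      (Summable fun m : ℕ => ‖(-1 : ℂ) ^ (m + 1) * (∑' k : Fin (m + 1) → ℕ, Fterm x (m + 1) k)‖) ∧
      ‖FF x‖ ≤ Real.exp (∑' k : ℕ, ‖x k * x (k + 1)‖) := by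
  have hxnn : Summable fun k => ‖x k * x (k + 1)‖₊ := by
    rw [← NNReal.summable_coe]; simpa using hx
  set S : ℝ≥0∞ := ∑' n, (‖x n * x (n + 1)‖₊ : ℝ≥0∞) with hSdef
  have hS : S ≠ ⊤ := ENNReal.tsum_coe_ne_top_iff_summable.2 hxnn
  set Sr : ℝ := ∑' k, ‖x k * x (k + 1)‖ with hSrdef
  have hSr : S.toReal = Sr := by
    rw [hSdef, hSrdef, ← ENNReal.coe_tsum hxnn, ENNReal.coe_toReal, NNReal.coe_tsum]
    simp
  have hfact0 : ∀ m : ℕ, ((m.factorial : ℝ≥0∞)) ≠ 0 := by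
    intro m; exact_mod_cast (Nat.factorial_pos m).ne'
  have hfactT : ∀ m : ℕ, ((m.factorial : ℝ≥0∞)) ≠ ⊤ := fun m => ENNReal.natCast_ne_top _
  have hC : ∀ m : ℕ, S ^ m / (m.factorial : ℝ≥0∞) ≠ ⊤ := fun m =>
    (ENNReal.div_lt_top (ENNReal.pow_ne_top hS) (hfact0 m)).ne
  have hFt : ∀ m : ℕ, ∑' k : Fin m → ℕ, (‖Fterm x m k‖₊ : ℝ≥0∞)
      ≤ S ^ m / (m.factorial : ℝ≥0∞) := by
    intro m
    rw [ENNReal.le_div_iff_mul_le (Or.inl (hfact0 m)) (Or.inl (hfactT m))]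
    rw [mul_comm]
    exact Fterm_tsum_le x m
  have key : ∀ m : ℕ, Summable (fun k : Fin m → ℕ => ‖Fterm x m k‖) ∧
      ∑' k : Fin m → ℕ, ‖Fterm x m k‖ ≤ Sr ^ m / (m.factorial : ℝ) := by
    intro m
    have h := summable_norm_and_tsum_le (Fterm x m) _ (hC m) (hFt m)
    refine ⟨h.1, h.2.trans_eq ?_⟩
    rw [ENNReal.toReal_div, ENNReal.toReal_pow, hSr, ENNReal.toReal_natCast]
  have hFbound : ∀ m : ℕ,
      ‖(-1 : ℂ) ^ (m + 1) * ∑' k : Fin (m + 1) → ℕ, Fterm x (m + 1) k‖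
        ≤ Sr ^ (m + 1) / ((m + 1).factorial : ℝ) := by
    intro m
    rw [norm_mul, norm_pow, norm_neg, norm_one, one_pow, one_mul]
    exact (norm_tsum_le_tsum_norm (key (m + 1)).1).trans (key (m + 1)).2
  have hshift : Summable (fun m : ℕ => Sr ^ (m + 1) / ((m + 1).factorial : ℝ)) :=
    (summable_nat_add_iff 1).2 (Real.summable_pow_div_factorial Sr)
  have hsum2 : Summable (fun m : ℕ =>
      ‖(-1 : ℂ) ^ (m + 1) * ∑' k : Fin (m + 1) → ℕ, Fterm x (m + 1) k‖) :=
    Summable.of_nonneg_of_le (fun m => norm_nonneg _) hFbound hshift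
  refine ⟨fun m => (key m).1, hsum2, ?_⟩
  have hexp : Real.exp Sr = 1 + ∑' m : ℕ, Sr ^ (m + 1) / ((m + 1).factorial : ℝ) := by
    rw [Real.exp_eq_exp_ℝ, NormedSpace.exp_eq_tsum_div]
    show (∑' n : ℕ, Sr ^ n / (n.factorial : ℝ)) = _
    rw [(Real.summable_pow_div_factorial Sr).tsum_eq_zero_add]
    norm_num
  rw [FF, hexp]
  refine (norm_add_le _ _).trans ?_
  rw [norm_one]
  gcongr
  exact (norm_tsum_le_tsum_norm hsum2).trans (hsum2.tsum_le_tsum hFbound hshift)
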